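/- arXiv:2005.12029 — 9 statements merged into one kernel-verified Lean document; each statement's English description precedes it below -/
import Mathlib

section
/- Let C be a category with an initial object k and binary coproducts, and let (H, Δ, ε, S) be a Zhang algebra of C. Then for every object A of C, the set Hom_C(H, A) is a group under the convolution product f ∗ g := (f ⊔̇ g) ∘ Δ, with identity element η_A ∘ ε, and with the inverse of any f given by f ∘ S. -/
open CategoryTheory CategoryTheory.Limits

universe u v

/-- Let `C` be a category with an initial object and binary coproducts and
`(H, Δ, ε, S)` a Zhang algebra of `C`. Then for every object `A`, the hom-set `H ⟶ A`
is a group under the convolution product `f ∗ g := (f ⊔̇ g) ∘ Δ`, with identity `η_A ∘ ε`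
and inverse `f ∘ S`. -/
theorem zhang_hom_group {C : Type u} [Category.{v} C] [HasInitial C] [HasBinaryCoproducts C]
    (H : C) (Δ : H ⟶ H ⨿ H) (ε : H ⟶ ⊥_ C) (S : H ⟶ H)
    (hcoassoc : Δ ≫ coprod.map Δ (𝟙 H) ≫ (coprod.associator H H H).hom
      = Δ ≫ coprod.map (𝟙 H) Δ)
    (hcounit_l : Δ ≫ coprod.desc (ε ≫ initial.to H) (𝟙 H) = 𝟙 H)
    (hcounit_r : Δ ≫ coprod.desc (𝟙 H) (ε ≫ initial.to H) = 𝟙 H)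
    (hantipode_l : Δ ≫ coprod.desc S (𝟙 H) = ε ≫ initial.to H)
    (hantipode_r : Δ ≫ coprod.desc (𝟙 H) S = ε ≫ initial.to H)
    (A : C) :
    ∃ grp : Group (H ⟶ A),
      (∀ f g : H ⟶ A, (letI := grp; f * g) = Δ ≫ coprod.desc f g) ∧
      ((letI := grp; (1 : H ⟶ A)) = ε ≫ initial.to A) ∧
      (∀ f : H ⟶ A, (letI := grp; f⁻¹) = S ≫ f) := by
  classical
  have hinit : ∀ (X : C) (f : X ⟶ A), initial.to X ≫ f = initial.to A := fun X f =>
    initial.hom_ext _ _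
  letI : Mul (H ⟶ A) := ⟨fun f g => Δ ≫ coprod.desc f g⟩
  letI : One (H ⟶ A) := ⟨ε ≫ initial.to A⟩
  letI : Inv (H ⟶ A) := ⟨fun f => S ≫ f⟩
  refine ⟨Group.ofLeftAxioms ?assoc ?onemul ?invmul, fun f g => rfl, rfl, fun f => rfl⟩
  · intro f g h
    show Δ ≫ coprod.desc (Δ ≫ coprod.desc f g) h = Δ ≫ coprod.desc f (Δ ≫ coprod.desc g h)
    have h1 := congrArg (fun w => w ≫ coprod.desc f (coprod.desc g h)) hcoassoc
    simp at h1
    rw [← h1]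
    congr 2
    · congr 2
      · exact (coprod.inl_desc _ _).symm
      · erw [coprod.inr_desc, coprod.inl_desc]
    · erw [coprod.inr_desc, coprod.inr_desc]
  · intro f
    show Δ ≫ coprod.desc (ε ≫ initial.to A) f = f
    have h1 := congrArg (fun w => w ≫ f) hcounit_l
    simp only [Category.assoc, coprod.desc_comp, Category.id_comp] at h1
    rw [hinit H f] at h1
    simpa using h1
  · intro f
    show Δ ≫ coprod.desc (S ≫ f) f = ε ≫ initial.to A
    have h1 := congrArg (fun w => w ≫ f) hantipode_l
    simp only [Category.assoc, coprod.desc_comp, Category.id_comp] at h1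
    rw [hinit H f] at h1
    simpa using h1
end

section
/- Let C be a category with an initial object k and binary coproducts, and let (H, Δ, ε, S) be a Zhang algebra of C. Let τ : H ⊔ H → H ⊔ H denote the canonical symmetry isomorphism exchanging the two coproduct factors (τ = ι₂ ⊔̇ ι₁, where ι₁, ι₂ : H → H ⊔ H are the coproduct injections). Then the antipode is an anti-comorphism: τ ∘ (S ⊔ S) ∘ Δ = Δ ∘ S. -/
open CategoryTheory CategoryTheory.Limits

universe u v

/-- For a Zhang algebra `(H, Δ, ε, S)` in a category with an initial object
and binary coproducts, the antipode is an anti-comorphism: `τ ∘ (S ⊔ S) ∘ Δ = Δ ∘ S`, where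
`τ = ι₂ ⊔̇ ι₁ : H ⊔ H → H ⊔ H` is the canonical symmetry exchanging the two factors. -/
theorem zhang_antipode_anticomorphism
    {C : Type u} [Category.{v} C] [HasInitial C] [HasBinaryCoproducts C]
    (H : C) (Δ : H ⟶ H ⨿ H) (ε : H ⟶ ⊥_ C) (S : H ⟶ H)
    (hcoassoc : Δ ≫ coprod.map Δ (𝟙 H) ≫ (coprod.associator H H H).hom
      = Δ ≫ coprod.map (𝟙 H) Δ)
    (hcounit_l : Δ ≫ coprod.desc (ε ≫ initial.to H) (𝟙 H) = 𝟙 H)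
    (hcounit_r : Δ ≫ coprod.desc (𝟙 H) (ε ≫ initial.to H) = 𝟙 H)
    (hantipode_l : Δ ≫ coprod.desc S (𝟙 H) = ε ≫ initial.to H)
    (hantipode_r : Δ ≫ coprod.desc (𝟙 H) S = ε ≫ initial.to H) :
    Δ ≫ coprod.map S S ≫ coprod.desc coprod.inr coprod.inl = S ≫ Δ := by
  -- the convolution unit
  set e : H ⟶ H ⨿ H := ε ≫ initial.to (H ⨿ H) with he
  have hinit : ∀ f : H ⟶ H ⨿ H, ε ≫ initial.to H ≫ f = e := by
    intro f
    rw [he]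
    congr 1
    exact initial.hom_ext _ _
  -- associativity of convolution on Hom(H, H ⨿ H)
  have assoc' : ∀ f g h : H ⟶ H ⨿ H,
      Δ ≫ coprod.desc (Δ ≫ coprod.desc f g) h = Δ ≫ coprod.desc f (Δ ≫ coprod.desc g h) := by
    intro f g h
    have h1 : coprod.desc (Δ ≫ coprod.desc f g) h
        = coprod.map Δ (𝟙 H) ≫ (coprod.associator H H H).hom ≫ coprod.desc f (coprod.desc g h) := by
      apply coprod.hom_ext <;> simp <;> simp only [coprod.inl_desc, coprod.inr_desc, coprod.inl_desc_assoc, coprod.inr_desc_assoc]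
    have h2 : coprod.desc f (Δ ≫ coprod.desc g h)
        = coprod.map (𝟙 H) Δ ≫ coprod.desc f (coprod.desc g h) := by
      ext <;> simp
    rw [h1, h2, reassoc_of% hcoassoc]
  -- conv Δ (S ≫ Δ) = e
  have h1 : Δ ≫ coprod.desc Δ (S ≫ Δ) = e := by
    have : coprod.desc Δ (S ≫ Δ) = coprod.desc (𝟙 H) S ≫ Δ := by ext <;> simp
    rw [this, ← Category.assoc, hantipode_r, Category.assoc, hinit]
  -- conv (S ≫ inl) Δ = inr
  have h2 : Δ ≫ coprod.desc (S ≫ coprod.inl) Δ = coprod.inr := by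
    have hΔ : (Δ : H ⟶ H ⨿ H) = Δ ≫ coprod.desc coprod.inl coprod.inr := by simp
    calc Δ ≫ coprod.desc (S ≫ coprod.inl) Δ
        = Δ ≫ coprod.desc (S ≫ coprod.inl) (Δ ≫ coprod.desc coprod.inl coprod.inr) := by
          rw [← hΔ]
      _ = Δ ≫ coprod.desc (Δ ≫ coprod.desc (S ≫ coprod.inl) coprod.inl) coprod.inr := by
          rw [assoc']
      _ = Δ ≫ coprod.desc e coprod.inr := by
          have : Δ ≫ coprod.desc (S ≫ coprod.inl) coprod.inl = e := by
            have hd : coprod.desc (S ≫ coprod.inl) (coprod.inl : H ⟶ H ⨿ H)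
                = coprod.desc S (𝟙 H) ≫ coprod.inl := by ext <;> simp
            rw [hd, ← Category.assoc, hantipode_l, Category.assoc, hinit]
          rw [this]
      _ = coprod.inr := by
          have : coprod.desc e (coprod.inr : H ⟶ H ⨿ H)
              = coprod.desc (ε ≫ initial.to H) (𝟙 H) ≫ coprod.inr := by
            rw [he]; ext
            · simp only [coprod.inl_desc, coprod.inl_desc_assoc, Category.assoc]
              congr 1
              exact initial.hom_ext _ _
            · simp
          rw [this, ← Category.assoc, hcounit_l, Category.id_comp]
  -- conv G Δ = e, where G = Δ ≫ (S ⊔ S) ≫ τ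
  have hG : Δ ≫ coprod.map S S ≫ coprod.desc coprod.inr coprod.inl
      = Δ ≫ coprod.desc (S ≫ coprod.inr) (S ≫ coprod.inl) := by simp
  have h3 : Δ ≫ coprod.desc (Δ ≫ coprod.desc (S ≫ coprod.inr) (S ≫ coprod.inl)) Δ = e := by
    rw [assoc', h2]
    have : coprod.desc (S ≫ coprod.inr) (coprod.inr : H ⟶ H ⨿ H)
        = coprod.desc S (𝟙 H) ≫ coprod.inr := by ext <;> simp
    rw [this, ← Category.assoc, hantipode_l, Category.assoc, hinit]
  -- unit laws
  have unit_l : ∀ f : H ⟶ H ⨿ H, Δ ≫ coprod.desc e f = f := by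
    intro f
    have : coprod.desc e f = coprod.desc (ε ≫ initial.to H) (𝟙 H) ≫ f := by
      ext
      · rw [coprod.inl_desc, coprod.inl_desc_assoc, he, Category.assoc]
        congr 1
        exact initial.hom_ext _ _
      · rw [coprod.inr_desc, coprod.inr_desc_assoc, Category.id_comp]
    rw [this, ← Category.assoc, hcounit_l, Category.id_comp]
  have unit_r : ∀ f : H ⟶ H ⨿ H, Δ ≫ coprod.desc f e = f := by
    intro f
    have : coprod.desc f e = coprod.desc (𝟙 H) (ε ≫ initial.to H) ≫ f := by
      ext
      · rw [coprod.inl_desc, coprod.inl_desc_assoc, Category.id_comp]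
      · rw [coprod.inr_desc, coprod.inr_desc_assoc, he, Category.assoc]
        congr 1
        exact initial.hom_ext _ _
    rw [this, ← Category.assoc, hcounit_r, Category.id_comp]
  -- conclude: S ≫ Δ = conv e (S≫Δ) = conv (conv G Δ) (S≫Δ) = conv G (conv Δ (S≫Δ)) = conv G e = G
  rw [hG]
  calc Δ ≫ coprod.desc (S ≫ coprod.inr) (S ≫ coprod.inl)
      = Δ ≫ coprod.desc (Δ ≫ coprod.desc (S ≫ coprod.inr) (S ≫ coprod.inl))
          (Δ ≫ coprod.desc Δ (S ≫ Δ)) := by rw [h1, unit_r]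
    _ = Δ ≫ coprod.desc (Δ ≫ coprod.desc (Δ ≫ coprod.desc (S ≫ coprod.inr) (S ≫ coprod.inl)) Δ)
          (S ≫ Δ) := (assoc' _ _ _).symm
    _ = S ≫ Δ := by rw [h3, unit_l]
end

section
/- Let C be a category with an initial object k and binary coproducts, and let (H, Δ, ε, S) be a Zhang algebra of C. Then the antipode is involutive: S ∘ S = id_H. -/
open CategoryTheory CategoryTheory.Limits

universe u v

/-- For a Zhang algebra `(H, Δ, ε, S)` in a category with an initial object
and binary coproducts, the antipode is involutive: `S ∘ S = id_H`. -/
theorem zhang_antipode_involutive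
    {C : Type u} [Category.{v} C] [HasInitial C] [HasBinaryCoproducts C]
    (H : C) (Δ : H ⟶ H ⨿ H) (ε : H ⟶ ⊥_ C) (S : H ⟶ H)
    (hcoassoc : Δ ≫ coprod.map Δ (𝟙 H) ≫ (coprod.associator H H H).hom
      = Δ ≫ coprod.map (𝟙 H) Δ)
    (hcounit_l : Δ ≫ coprod.desc (ε ≫ initial.to H) (𝟙 H) = 𝟙 H)
    (hcounit_r : Δ ≫ coprod.desc (𝟙 H) (ε ≫ initial.to H) = 𝟙 H)
    (hantipode_l : Δ ≫ coprod.desc S (𝟙 H) = ε ≫ initial.to H)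
    (hantipode_r : Δ ≫ coprod.desc (𝟙 H) S = ε ≫ initial.to H) :
    S ≫ S = 𝟙 H := by
  -- `initial.to H` absorbs postcomposition
  have hinit : ∀ g : H ⟶ H, initial.to H ≫ g = initial.to H := fun g =>
    initial.hom_ext _ _
  -- left unit law for convolution
  have unit_l : ∀ g : H ⟶ H, Δ ≫ coprod.desc (ε ≫ initial.to H) g = g := by
    intro g
    have : coprod.desc (ε ≫ initial.to H) g
        = coprod.desc (ε ≫ initial.to H) (𝟙 H) ≫ g := by
      rw [coprod.desc_comp, Category.id_comp, Category.assoc, hinit]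
    rw [this, ← Category.assoc, hcounit_l, Category.id_comp]
  -- associativity of convolution
  have massoc : ∀ f g h : H ⟶ H,
      Δ ≫ coprod.desc (Δ ≫ coprod.desc f g) h
        = Δ ≫ coprod.desc f (Δ ≫ coprod.desc g h) := by
    intro f g h
    have h1 : coprod.desc (Δ ≫ coprod.desc f g) h
        = coprod.map Δ (𝟙 H) ≫ coprod.desc (coprod.desc f g) h := by
      rw [coprod.map_desc, Category.id_comp]
    have h2 : coprod.desc (coprod.desc f g) h
        = (coprod.associator H H H).hom ≫ coprod.desc f (coprod.desc g h) := by
      apply coprod.hom_ext <;> [apply coprod.hom_ext; skip] <;> simp only [coprod.associator, coprod.inl_desc, coprod.inr_desc, coprod.inl_desc_assoc, coprod.inr_desc_assoc, Category.assoc]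
    have h3 : coprod.desc f (Δ ≫ coprod.desc g h)
        = coprod.map (𝟙 H) Δ ≫ coprod.desc f (coprod.desc g h) := by
      rw [coprod.map_desc, Category.id_comp]
    have hco' : (Δ ≫ coprod.map Δ (𝟙 H)) ≫ (coprod.associator H H H).hom
        = Δ ≫ coprod.map (𝟙 H) Δ := by
      rw [Category.assoc]; exact hcoassoc
    rw [h1, h2, h3]
    simp only [← Category.assoc]
    rw [hco']
  -- `S ≫ S` is a right convolution inverse of `S`
  have hSS : Δ ≫ coprod.desc S (S ≫ S) = ε ≫ initial.to H := by
    have : coprod.desc S (S ≫ S) = coprod.desc (𝟙 H) S ≫ S := by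
      rw [coprod.desc_comp, Category.id_comp]
    rw [this, ← Category.assoc, hantipode_r, Category.assoc, hinit]
  calc S ≫ S
      = Δ ≫ coprod.desc (ε ≫ initial.to H) (S ≫ S) := (unit_l _).symm
    _ = Δ ≫ coprod.desc (Δ ≫ coprod.desc (𝟙 H) S) (S ≫ S) := by rw [hantipode_r]
    _ = Δ ≫ coprod.desc (𝟙 H) (Δ ≫ coprod.desc S (S ≫ S)) := massoc _ _ _
    _ = Δ ≫ coprod.desc (𝟙 H) (ε ≫ initial.to H) := by rw [hSS]
    _ = 𝟙 H := hcounit_r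
end

section
/- Let C be a category with an initial object k and binary coproducts, and let (H, Δ, ε, S) be a Zhang algebra of C. Then the adjoint coaction Ω_c makes H an H-comodule: (id_H ⊔ Ω_c) ∘ Ω_c = (Δ ⊔ id_H) ∘ Ω_c as morphisms H → H ⊔ H ⊔ H (up to the canonical associativity isomorphism of iterated coproducts), and ((η_H ∘ ε) ⊔̇ id_H) ∘ Ω_c = id_H. -/
open CategoryTheory CategoryTheory.Limits

universe u v

/-- The adjoint coaction `Ω_c := (ι₁ ⊔̇ ι₂ ⊔̇ ι₁) ∘ (id_{H⊔H} ⊔ S) ∘ (Δ ⊔ id_H) ∘ Δ` of a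
Zhang algebra on itself; the first coproduct factor is the coacting copy of `H` and the
second is the comodule copy. -/
noncomputable def adjointCoaction {C : Type u} [Category.{v} C] [HasBinaryCoproducts C]
    (H : C) (Δ : H ⟶ H ⨿ H) (S : H ⟶ H) : H ⟶ H ⨿ H :=
  Δ ≫ coprod.map Δ (𝟙 H) ≫ coprod.map (𝟙 (H ⨿ H)) S ≫
    coprod.desc (coprod.desc coprod.inl coprod.inr) coprod.inl

namespace ZhangAux

variable {C : Type u} [Category.{v} C] [HasInitial C] [HasBinaryCoproducts C]
variable (H : C) (Δ : H ⟶ H ⨿ H) (ε : H ⟶ ⊥_ C) (S : H ⟶ H)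

/-- Convolution of two morphisms out of `H`. -/
noncomputable def zconv {X : C} (f g : H ⟶ X) : H ⟶ X := Δ ≫ coprod.desc f g

lemma key {X : C} (f g : H ⟶ X) :
    adjointCoaction H Δ S ≫ coprod.desc f g
      = zconv H Δ (zconv H Δ f g) (S ≫ f) := by
  simp [adjointCoaction, zconv, coprod.inl_desc, coprod.inr_desc]

lemma zconv_assoc
    (hcoassoc : Δ ≫ coprod.map Δ (𝟙 H) ≫ (coprod.associator H H H).hom
      = Δ ≫ coprod.map (𝟙 H) Δ)
    {X : C} (f g h : H ⟶ X) :
    zconv H Δ (zconv H Δ f g) h = zconv H Δ f (zconv H Δ g h) := by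
  have := hcoassoc =≫ coprod.desc f (coprod.desc g h)
  simp only [Category.assoc] at this
  simpa [zconv, coprod.inl_desc, coprod.inr_desc, coprod.inl_desc_assoc, coprod.inr_desc_assoc] using this

lemma one_zconv
    (hcounit_l : Δ ≫ coprod.desc (ε ≫ initial.to H) (𝟙 H) = 𝟙 H)
    {X : C} (g : H ⟶ X) :
    zconv H Δ (ε ≫ initial.to X) g = g := by
  have := hcounit_l =≫ g
  simp only [Category.assoc] at this
  simpa [zconv, initial.to_comp] using this

lemma inv_zconv
    (hantipode_l : Δ ≫ coprod.desc S (𝟙 H) = ε ≫ initial.to H)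
    {X : C} (f : H ⟶ X) :
    zconv H Δ (S ≫ f) f = ε ≫ initial.to X := by
  have := hantipode_l =≫ f
  simp only [Category.assoc] at this
  simpa [zconv, initial.to_comp] using this

/-- The convolution group structure on `H ⟶ X`. -/
noncomputable def zgroup
    (hcoassoc : Δ ≫ coprod.map Δ (𝟙 H) ≫ (coprod.associator H H H).hom
      = Δ ≫ coprod.map (𝟙 H) Δ)
    (hcounit_l : Δ ≫ coprod.desc (ε ≫ initial.to H) (𝟙 H) = 𝟙 H)
    (hantipode_l : Δ ≫ coprod.desc S (𝟙 H) = ε ≫ initial.to H)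
    (X : C) : Group (H ⟶ X) :=
  letI : Mul (H ⟶ X) := ⟨zconv H Δ⟩
  letI : One (H ⟶ X) := ⟨ε ≫ initial.to X⟩
  letI : Inv (H ⟶ X) := ⟨fun f => S ≫ f⟩
  Group.ofLeftAxioms (zconv_assoc H Δ hcoassoc)
    (one_zconv H Δ ε hcounit_l) (inv_zconv H Δ ε S hantipode_l)

end ZhangAux

/-- For a Zhang algebra `(H, Δ, ε, S)`, the adjoint coaction `Ω_c` makes `H`
an `H`-comodule: `(id_H ⊔ Ω_c) ∘ Ω_c = (Δ ⊔ id_H) ∘ Ω_c` (up to the canonical associativity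
isomorphism) and `((η_H ∘ ε) ⊔̇ id_H) ∘ Ω_c = id_H`. -/
theorem zhang_adjointCoaction_comodule
    {C : Type u} [Category.{v} C] [HasInitial C] [HasBinaryCoproducts C]
    (H : C) (Δ : H ⟶ H ⨿ H) (ε : H ⟶ ⊥_ C) (S : H ⟶ H)
    (hcoassoc : Δ ≫ coprod.map Δ (𝟙 H) ≫ (coprod.associator H H H).hom
      = Δ ≫ coprod.map (𝟙 H) Δ)
    (hcounit_l : Δ ≫ coprod.desc (ε ≫ initial.to H) (𝟙 H) = 𝟙 H)
    (hcounit_r : Δ ≫ coprod.desc (𝟙 H) (ε ≫ initial.to H) = 𝟙 H)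
    (hantipode_l : Δ ≫ coprod.desc S (𝟙 H) = ε ≫ initial.to H)
    (hantipode_r : Δ ≫ coprod.desc (𝟙 H) S = ε ≫ initial.to H) :
    (adjointCoaction H Δ S ≫ coprod.map (𝟙 H) (adjointCoaction H Δ S)
      = adjointCoaction H Δ S ≫ coprod.map Δ (𝟙 H) ≫ (coprod.associator H H H).hom) ∧
    (adjointCoaction H Δ S ≫ coprod.desc (ε ≫ initial.to H) (𝟙 H) = 𝟙 H) := by
  open ZhangAux in
  constructor
  · letI := zgroup H Δ ε S hcoassoc hcounit_l hantipode_l (H ⨿ (H ⨿ H))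
    set a : H ⟶ H ⨿ (H ⨿ H) := coprod.inl with ha
    set b : H ⟶ H ⨿ (H ⨿ H) := coprod.inl ≫ coprod.inr with hb
    set c : H ⟶ H ⨿ (H ⨿ H) := coprod.inr ≫ coprod.inr with hc
    have hmap : coprod.map (𝟙 H) (adjointCoaction H Δ S)
        = coprod.desc a (adjointCoaction H Δ S ≫ coprod.inr) := by
      ext <;> simp [ha, coprod.inl_desc, coprod.inr_desc]
    have hinr : (coprod.inr : H ⨿ H ⟶ H ⨿ (H ⨿ H)) = coprod.desc b c := by
      ext <;> simp [hb, hc, coprod.inl_desc, coprod.inr_desc]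
    have hrhs : coprod.map Δ (𝟙 H) ≫ (coprod.associator H H H).hom
        = coprod.desc (Δ ≫ coprod.desc a b) c := by
      ext <;> simp [ha, hb, hc]
    have hΩinr : adjointCoaction H Δ S ≫ coprod.inr = b * c * b⁻¹ := by
      rw [hinr, key]; rfl
    calc adjointCoaction H Δ S ≫ coprod.map (𝟙 H) (adjointCoaction H Δ S)
        = a * (b * c * b⁻¹) * a⁻¹ := by rw [hmap, key, hΩinr]; rfl
      _ = (a * b) * c * (a * b)⁻¹ := by group
      _ = adjointCoaction H Δ S ≫ coprod.map Δ (𝟙 H) ≫ (coprod.associator H H H).hom := by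
          rw [hrhs, key]; rfl
  · letI := zgroup H Δ ε S hcoassoc hcounit_l hantipode_l H
    calc adjointCoaction H Δ S ≫ coprod.desc (ε ≫ initial.to H) (𝟙 H)
        = (1 : H ⟶ H) * 𝟙 H * (1 : H ⟶ H)⁻¹ := by rw [key]; rfl
      _ = 𝟙 H := by group
end

section
/- Let C be a category with an initial object k and binary coproducts, (H, Δ, ε, S) a Zhang algebra of C, and (M, Ω_M), (N, Ω_N) two right H-comodule algebras. Let ι_M, ι_N, ι_H denote the canonical morphisms of M, N and H into M ⊔ N ⊔ H, and define Ω_{M⊔N} := (ι_M ⊔̇ ι_H ⊔̇ ι_N ⊔̇ ι_H) ∘ (Ω_M ⊔ Ω_N) : M ⊔ N → M ⊔ N ⊔ H, where Ω_M ⊔ Ω_N : M ⊔ N → (M ⊔ H) ⊔ (N ⊔ H). Then (M ⊔ N, Ω_{M⊔N}) is a right H-comodule algebra, i.e., (Ω_{M⊔N} ⊔ id_H) ∘ Ω_{M⊔N} = (id_{M⊔N} ⊔ Δ) ∘ Ω_{M⊔N} (up to the canonical associativity isomorphism) and (id_{M⊔N} ⊔̇ (η_{M⊔N} ∘ ε))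 ∘ Ω_{M⊔N} = id_{M⊔N}. -/
open CategoryTheory CategoryTheory.Limits

universe u v

/-- The coaction `Ω_{M⊔N} := (ι_M ⊔̇ ι_H ⊔̇ ι_N ⊔̇ ι_H) ∘ (Ω_M ⊔ Ω_N)` on the coproduct of two
right `H`-comodule algebras `(M, Ω_M)` and `(N, Ω_N)`. -/
noncomputable def coprodCoaction {C : Type u} [Category.{v} C] [HasBinaryCoproducts C]
    {M N H : C} (ΩM : M ⟶ M ⨿ H) (ΩN : N ⟶ N ⨿ H) : M ⨿ N ⟶ (M ⨿ N) ⨿ H :=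
  coprod.map ΩM ΩN ≫
    coprod.desc
      (coprod.desc (coprod.inl ≫ coprod.inl) coprod.inr)
      (coprod.desc (coprod.inr ≫ coprod.inl) coprod.inr)

/-- If `(M, Ω_M)` and `(N, Ω_N)` are right `H`-comodule algebras over a
Zhang algebra `(H, Δ, ε, S)`, then `(M ⊔ N, Ω_{M⊔N})` is a right `H`-comodule algebra. -/
theorem coprod_of_comodules_is_comodule
    {C : Type u} [Category.{v} C] [HasInitial C] [HasBinaryCoproducts C]
    (H : C) (Δ : H ⟶ H ⨿ H) (ε : H ⟶ ⊥_ C) (S : H ⟶ H)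
    (hcoassoc : Δ ≫ coprod.map Δ (𝟙 H) ≫ (coprod.associator H H H).hom
      = Δ ≫ coprod.map (𝟙 H) Δ)
    (hcounit_l : Δ ≫ coprod.desc (ε ≫ initial.to H) (𝟙 H) = 𝟙 H)
    (hcounit_r : Δ ≫ coprod.desc (𝟙 H) (ε ≫ initial.to H) = 𝟙 H)
    (hantipode_l : Δ ≫ coprod.desc S (𝟙 H) = ε ≫ initial.to H)
    (hantipode_r : Δ ≫ coprod.desc (𝟙 H) S = ε ≫ initial.to H)
    (M N : C) (ΩM : M ⟶ M ⨿ H) (ΩN : N ⟶ N ⨿ H)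
    (hM_coassoc : ΩM ≫ coprod.map ΩM (𝟙 H) ≫ (coprod.associator M H H).hom
      = ΩM ≫ coprod.map (𝟙 M) Δ)
    (hM_counit : ΩM ≫ coprod.desc (𝟙 M) (ε ≫ initial.to M) = 𝟙 M)
    (hN_coassoc : ΩN ≫ coprod.map ΩN (𝟙 H) ≫ (coprod.associator N H H).hom
      = ΩN ≫ coprod.map (𝟙 N) Δ)
    (hN_counit : ΩN ≫ coprod.desc (𝟙 N) (ε ≫ initial.to N) = 𝟙 N) :
    (coprodCoaction ΩM ΩN ≫ coprod.map (coprodCoaction ΩM ΩN) (𝟙 H)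
        ≫ (coprod.associator (M ⨿ N) H H).hom
      = coprodCoaction ΩM ΩN ≫ coprod.map (𝟙 (M ⨿ N)) Δ) ∧
    (coprodCoaction ΩM ΩN ≫ coprod.desc (𝟙 (M ⨿ N)) (ε ≫ initial.to (M ⨿ N))
      = 𝟙 (M ⨿ N)) := by
  constructor
  · apply coprod.hom_ext
    · have := hM_coassoc =≫ coprod.map (coprod.inl : M ⟶ M ⨿ N) (𝟙 (H ⨿ H))
      simp only [coprodCoaction, coprod.inl_desc, coprod.inr_desc, coprod.map_desc,
        coprod.inl_map, coprod.inr_map, Category.assoc, coprod.desc_comp,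
        coprod.associator_hom, coprod.map_map, Category.id_comp, Category.comp_id] at this ⊢
      simpa using this
    · have := hN_coassoc =≫ coprod.map (coprod.inr : N ⟶ M ⨿ N) (𝟙 (H ⨿ H))
      simp only [coprodCoaction, coprod.inl_desc, coprod.inr_desc, coprod.map_desc,
        coprod.inl_map, coprod.inr_map, Category.assoc, coprod.desc_comp,
        coprod.associator_hom, coprod.map_map, Category.id_comp, Category.comp_id] at this ⊢
      simpa using this
  · apply coprod.hom_ext
    · have := hM_counit =≫ (coprod.inl : M ⟶ M ⨿ N)
      have h0 : initial.to M ≫ (coprod.inl : M ⟶ M ⨿ N) = initial.to (M ⨿ N) :=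
        Subsingleton.elim _ _
      simp only [coprodCoaction, coprod.inl_desc, coprod.inr_desc, coprod.map_desc,
        coprod.inl_map, coprod.inr_map, Category.assoc, coprod.desc_comp,
        Category.id_comp, Category.comp_id, h0] at this ⊢
      simpa [h0] using this
    · have := hN_counit =≫ (coprod.inr : N ⟶ M ⨿ N)
      have h0 : initial.to N ≫ (coprod.inr : N ⟶ M ⨿ N) = initial.to (M ⨿ N) :=
        Subsingleton.elim _ _
      simp only [coprodCoaction, coprod.inl_desc, coprod.inr_desc, coprod.map_desc,
        coprod.inl_map, coprod.inr_map, Category.assoc, coprod.desc_comp,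
        Category.id_comp, Category.comp_id, h0] at this ⊢
      simpa [h0] using this
end

section
/- Let C be a category with an initial object k and binary coproducts, (H, Δ, ε, S) a Zhang algebra of C, and (M, Ω_M), (N, Ω_N), (A, Ω_A) right H-comodule algebras. If f : (M, Ω_M) → (A, Ω_A) and g : (N, Ω_N) → (A, Ω_A) are morphisms of right H-comodule algebras, then f ⊔̇ g : M ⊔ N → A is a morphism of right H-comodule algebras from (M ⊔ N, Ω_{M⊔N}) to (A, Ω_A); that is, Ω_A ∘ (f ⊔̇ g) = ((f ⊔̇ g) ⊔ id_H) ∘ Ω_{M⊔N}, where Ω_{M⊔N} := (ι_M ⊔̇ ι_H ⊔̇ ι_N ⊔̇ ι_H) ∘ (Ω_M ⊔ Ω_N) : M ⊔ N → M ⊔ N ⊔ H with ι_M, ι_N, ι_H the canonical morphisms of M, N, H into M ⊔ N ⊔ H. -/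
open CategoryTheory CategoryTheory.Limits

universe u v

/-- If `f : (M, Ω_M) → (A, Ω_A)` and `g : (N, Ω_N) → (A, Ω_A)` are morphisms
of right `H`-comodule algebras over a Zhang algebra `(H, Δ, ε, S)`, then
`f ⊔̇ g : (M ⊔ N, Ω_{M⊔N}) → (A, Ω_A)` is a morphism of right `H`-comodule algebras. -/
theorem desc_of_comodule_morphisms_is_comodule_morphism
    {C : Type u} [Category.{v} C] [HasInitial C] [HasBinaryCoproducts C]
    (H : C) (Δ : H ⟶ H ⨿ H) (ε : H ⟶ ⊥_ C) (S : H ⟶ H)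
    (hcoassoc : Δ ≫ coprod.map Δ (𝟙 H) ≫ (coprod.associator H H H).hom
      = Δ ≫ coprod.map (𝟙 H) Δ)
    (hcounit_l : Δ ≫ coprod.desc (ε ≫ initial.to H) (𝟙 H) = 𝟙 H)
    (hcounit_r : Δ ≫ coprod.desc (𝟙 H) (ε ≫ initial.to H) = 𝟙 H)
    (hantipode_l : Δ ≫ coprod.desc S (𝟙 H) = ε ≫ initial.to H)
    (hantipode_r : Δ ≫ coprod.desc (𝟙 H) S = ε ≫ initial.to H)
    (M N A : C) (ΩM : M ⟶ M ⨿ H) (ΩN : N ⟶ N ⨿ H) (ΩA : A ⟶ A ⨿ H)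
    (hM_coassoc : ΩM ≫ coprod.map ΩM (𝟙 H) ≫ (coprod.associator M H H).hom
      = ΩM ≫ coprod.map (𝟙 M) Δ)
    (hM_counit : ΩM ≫ coprod.desc (𝟙 M) (ε ≫ initial.to M) = 𝟙 M)
    (hN_coassoc : ΩN ≫ coprod.map ΩN (𝟙 H) ≫ (coprod.associator N H H).hom
      = ΩN ≫ coprod.map (𝟙 N) Δ)
    (hN_counit : ΩN ≫ coprod.desc (𝟙 N) (ε ≫ initial.to N) = 𝟙 N)
    (hA_coassoc : ΩA ≫ coprod.map ΩA (𝟙 H) ≫ (coprod.associator A H H).hom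
      = ΩA ≫ coprod.map (𝟙 A) Δ)
    (hA_counit : ΩA ≫ coprod.desc (𝟙 A) (ε ≫ initial.to A) = 𝟙 A)
    (f : M ⟶ A) (g : N ⟶ A)
    (hf : f ≫ ΩA = ΩM ≫ coprod.map f (𝟙 H))
    (hg : g ≫ ΩA = ΩN ≫ coprod.map g (𝟙 H)) :
    coprod.desc f g ≫ ΩA
      = coprodCoaction ΩM ΩN ≫ coprod.map (coprod.desc f g) (𝟙 H) := by
  unfold coprodCoaction
  apply coprod.hom_ext <;>
      simp only [coprod.inl_desc_assoc, coprod.inr_desc_assoc, hf, hg, coprod.map_desc, Category.assoc] <;>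
    congr 1 <;> apply coprod.hom_ext <;> simp [coprod.inl_desc, coprod.inr_desc]
end

section
/- Let C be a category with an initial object k and binary coproducts, and let (H, Δ, ε, S) be a Zhang algebra of C. Then the antipode is compatible with the adjoint coaction: Ω_c ∘ S = (id_H ⊔ S) ∘ Ω_c, where id_H ⊔ S : H ⊔ H → H ⊔ H applies S to the second coproduct factor. -/
open CategoryTheory CategoryTheory.Limits

universe u v

/-- A Zhang algebra structure on `H` makes each hom-set `H ⟶ X` into a group under
convolution. -/
noncomputable def zhangGroup {C : Type u} [Category.{v} C] [HasInitial C] [HasBinaryCoproducts C]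
    (H X : C) (Δ : H ⟶ H ⨿ H) (ε : H ⟶ ⊥_ C) (S : H ⟶ H)
    (hcoassoc : Δ ≫ coprod.map Δ (𝟙 H) ≫ (coprod.associator H H H).hom
      = Δ ≫ coprod.map (𝟙 H) Δ)
    (hcounit_l : Δ ≫ coprod.desc (ε ≫ initial.to H) (𝟙 H) = 𝟙 H)
    (hcounit_r : Δ ≫ coprod.desc (𝟙 H) (ε ≫ initial.to H) = 𝟙 H)
    (hantipode_l : Δ ≫ coprod.desc S (𝟙 H) = ε ≫ initial.to H) :
    Group (H ⟶ X) where
  mul f g := Δ ≫ coprod.desc f g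
  one := ε ≫ initial.to X
  inv f := S ≫ f
  mul_assoc f g h := by
    show Δ ≫ coprod.desc (Δ ≫ coprod.desc f g) h = Δ ≫ coprod.desc f (Δ ≫ coprod.desc g h)
    have e1 : coprod.desc (Δ ≫ coprod.desc f g) h
        = coprod.map Δ (𝟙 H) ≫ coprod.desc (coprod.desc f g) h := by simp
    have e2 : coprod.desc (coprod.desc f g) h
        = (coprod.associator H H H).hom ≫ coprod.desc f (coprod.desc g h) := by
      ext <;> simp only [Category.assoc, coprod.inl_desc_assoc, coprod.inr_desc_assoc, coprod.inl_desc, coprod.inr_desc, coprod.associator_hom]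
    rw [e1, e2, reassoc_of% hcoassoc]
    simp
  one_mul f := by
    show Δ ≫ coprod.desc (ε ≫ initial.to X) f = f
    have hto : initial.to X = initial.to H ≫ f := initial.hom_ext _ _
    have : coprod.desc (ε ≫ initial.to X) f
        = coprod.desc (ε ≫ initial.to H) (𝟙 H) ≫ f := by
      rw [hto]; ext <;> simp
    rw [this, reassoc_of% hcounit_l]
  mul_one f := by
    show Δ ≫ coprod.desc f (ε ≫ initial.to X) = f
    have hto : initial.to X = initial.to H ≫ f := initial.hom_ext _ _
    have : coprod.desc f (ε ≫ initial.to X)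
        = coprod.desc (𝟙 H) (ε ≫ initial.to H) ≫ f := by
      rw [hto]; ext <;> simp
    rw [this, reassoc_of% hcounit_r]
  inv_mul_cancel f := by
    show Δ ≫ coprod.desc (S ≫ f) f = ε ≫ initial.to X
    have : coprod.desc (S ≫ f) f = coprod.desc S (𝟙 H) ≫ f := by ext <;> simp
    rw [this, reassoc_of% hantipode_l]
    congr 1
    exact initial.hom_ext _ _

/-- For a Zhang algebra `(H, Δ, ε, S)`, the antipode is compatible with the
adjoint coaction: `Ω_c ∘ S = (id_H ⊔ S) ∘ Ω_c`. -/
theorem zhang_antipode_adjointCoaction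
    {C : Type u} [Category.{v} C] [HasInitial C] [HasBinaryCoproducts C]
    (H : C) (Δ : H ⟶ H ⨿ H) (ε : H ⟶ ⊥_ C) (S : H ⟶ H)
    (hcoassoc : Δ ≫ coprod.map Δ (𝟙 H) ≫ (coprod.associator H H H).hom
      = Δ ≫ coprod.map (𝟙 H) Δ)
    (hcounit_l : Δ ≫ coprod.desc (ε ≫ initial.to H) (𝟙 H) = 𝟙 H)
    (hcounit_r : Δ ≫ coprod.desc (𝟙 H) (ε ≫ initial.to H) = 𝟙 H)
    (hantipode_l : Δ ≫ coprod.desc S (𝟙 H) = ε ≫ initial.to H)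
    (hantipode_r : Δ ≫ coprod.desc (𝟙 H) S = ε ≫ initial.to H) :
    S ≫ adjointCoaction H Δ S = adjointCoaction H Δ S ≫ coprod.map (𝟙 H) S := by
  letI : Group (H ⟶ H ⨿ H) :=
    zhangGroup H (H ⨿ H) Δ ε S hcoassoc hcounit_l hcounit_r hantipode_l
  have hmul : ∀ f g : H ⟶ H ⨿ H, f * g = Δ ≫ coprod.desc f g := fun _ _ => rfl
  have hinv : ∀ f : H ⟶ H ⨿ H, f⁻¹ = S ≫ f := fun _ => rfl
  set a : H ⟶ H ⨿ H := coprod.inl with ha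
  set b : H ⟶ H ⨿ H := coprod.inr with hb
  have hΩ : adjointCoaction H Δ S = (a * b) * a⁻¹ := by
    rw [hmul, hmul, hinv]
    unfold adjointCoaction
    simp [ha, hb]
  have hcomp : ∀ (f g : H ⟶ H ⨿ H) (h : H ⨿ H ⟶ H ⨿ H),
      (f * g) ≫ h = (f ≫ h) * (g ≫ h) := by
    intro f g h
    rw [hmul, hmul]
    simp
  have hah : a ≫ coprod.map (𝟙 H) S = a := by simp [ha]
  have hbh : b ≫ coprod.map (𝟙 H) S = b⁻¹ := by simp [hb, hinv]
  calc S ≫ adjointCoaction H Δ S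
      = ((a * b) * a⁻¹)⁻¹ := by rw [hΩ]; exact (hinv _).symm
    _ = (a * b⁻¹) * a⁻¹ := by group
    _ = ((a ≫ coprod.map (𝟙 H) S) * (b ≫ coprod.map (𝟙 H) S))
          * (a⁻¹ ≫ coprod.map (𝟙 H) S) := by
        rw [hah, hbh]
        congr 1
        rw [hinv, Category.assoc, hah]
    _ = ((a * b) * a⁻¹) ≫ coprod.map (𝟙 H) S := by rw [hcomp, hcomp]
    _ = adjointCoaction H Δ S ≫ coprod.map (𝟙 H) S := by rw [hΩ]
end

section
/- Let C be a category with an initial object k and binary coproducts, and let (H, Δ, ε, S) be a Zhang algebra of C. Then the counit is compatible with the adjoint coaction: (id_H ⊔̇ (η_H ∘ ε)) ∘ Ω_c = η_H ∘ ε, i.e., collapsing the second coproduct factor of Ω_c via ε (followed by the unique morphism k → H) yields the trivial morphism η_H ∘ ε : H → H. -/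
open CategoryTheory CategoryTheory.Limits

universe u v

/-- For a Zhang algebra `(H, Δ, ε, S)`, the counit is compatible with the
adjoint coaction: `(id_H ⊔̇ (η_H ∘ ε)) ∘ Ω_c = η_H ∘ ε`. -/
theorem zhang_counit_adjointCoaction
    {C : Type u} [Category.{v} C] [HasInitial C] [HasBinaryCoproducts C]
    (H : C) (Δ : H ⟶ H ⨿ H) (ε : H ⟶ ⊥_ C) (S : H ⟶ H)
    (hcoassoc : Δ ≫ coprod.map Δ (𝟙 H) ≫ (coprod.associator H H H).hom
      = Δ ≫ coprod.map (𝟙 H) Δ)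
    (hcounit_l : Δ ≫ coprod.desc (ε ≫ initial.to H) (𝟙 H) = 𝟙 H)
    (hcounit_r : Δ ≫ coprod.desc (𝟙 H) (ε ≫ initial.to H) = 𝟙 H)
    (hantipode_l : Δ ≫ coprod.desc S (𝟙 H) = ε ≫ initial.to H)
    (hantipode_r : Δ ≫ coprod.desc (𝟙 H) S = ε ≫ initial.to H) :
    adjointCoaction H Δ S ≫ coprod.desc (𝟙 H) (ε ≫ initial.to H)
      = ε ≫ initial.to H := by
  have h : adjointCoaction H Δ S ≫ coprod.desc (𝟙 H) (ε ≫ initial.to H)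
      = Δ ≫ coprod.desc (𝟙 H) S := by
    simp only [adjointCoaction, Category.assoc, coprod.map_desc, coprod.desc_comp,
      coprod.inl_desc, coprod.inr_desc, Category.comp_id, Category.id_comp, hcounit_r]
  rw [h, hantipode_r]
end

section
/- Let (C, ⊗, E, α, ℓ, r) be a monoidal category endowed with a pair of inclusions (ι¹, ι²) that is compatible with the unit constraints. Then the unit object E is initial in C (for every object A there is exactly one morphism η_A : E → A), and moreover ι¹_{A,B} = (id_A ⊗ η_B) ∘ r_A⁻¹ and ι²_{A,B} = (η_A ⊗ id_B) ∘ ℓ_B⁻¹ for all objects A, B. -/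
open CategoryTheory MonoidalCategory

universe u v

/-- Let `(C, ⊗, E, α, ℓ, r)` be a monoidal category endowed with a pair of
inclusions `(ι¹, ι²)` compatible with the unit constraints.  Then the unit object `E` is
initial (for every object `A` there is exactly one morphism `E ⟶ A`), and moreover
`ι¹_{A,B} = (id_A ⊗ η_B) ∘ r_A⁻¹` and `ι²_{A,B} = (η_A ⊗ id_B) ∘ ℓ_B⁻¹` for all `A, B`. -/
theorem inclusions_compatible_imp_unit_initial
    {C : Type u} [Category.{v} C] [MonoidalCategory C]
    (ι₁ : ∀ A B : C, A ⟶ A ⊗ B) (ι₂ : ∀ A B : C, B ⟶ A ⊗ B)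
    (nat₁ : ∀ {A₁ B₁ A₂ B₂ : C} (f : A₁ ⟶ B₁) (g : A₂ ⟶ B₂),
      ι₁ A₁ A₂ ≫ (f ⊗ₘ g) = f ≫ ι₁ B₁ B₂)
    (nat₂ : ∀ {A₁ B₁ A₂ B₂ : C} (f : A₁ ⟶ B₁) (g : A₂ ⟶ B₂),
      ι₂ A₁ A₂ ≫ (f ⊗ₘ g) = g ≫ ι₂ B₁ B₂)
    (compat_l : ∀ A : C, ι₂ (𝟙_ C) A ≫ (λ_ A).hom = 𝟙 A)
    (compat_r : ∀ A : C, ι₁ A (𝟙_ C) ≫ (ρ_ A).hom = 𝟙 A) :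
    (∀ A : C, ∃! _η : 𝟙_ C ⟶ A, True) ∧
    (∀ (A B : C) (η : 𝟙_ C ⟶ B), ι₁ A B = (ρ_ A).inv ≫ (𝟙 A ⊗ₘ η)) ∧
    (∀ (A B : C) (η : 𝟙_ C ⟶ A), ι₂ A B = (λ_ B).inv ≫ (η ⊗ₘ 𝟙 B)) := by
  have hr : ∀ A : C, ι₁ A (𝟙_ C) = (ρ_ A).inv := fun A =>
    (Iso.comp_hom_eq_id (ρ_ A)).mp (compat_r A)
  have hl : ∀ A : C, ι₂ (𝟙_ C) A = (λ_ A).inv := fun A =>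
    (Iso.comp_hom_eq_id (λ_ A)).mp (compat_l A)
  have hEE : ι₁ (𝟙_ C) (𝟙_ C) = ι₂ (𝟙_ C) (𝟙_ C) := by
    rw [hr, hl, MonoidalCategory.unitors_inv_equal]
  have uniq : ∀ {A : C} (f : 𝟙_ C ⟶ A), f = ι₁ (𝟙_ C) A ≫ (λ_ A).hom := by
    intro A f
    have h2 := nat₁ (𝟙 (𝟙_ C)) f
    rw [hEE, nat₂ (𝟙 (𝟙_ C)) f, Category.id_comp] at h2
    calc f = f ≫ (ι₂ (𝟙_ C) A ≫ (λ_ A).hom) := by rw [compat_l, Category.comp_id]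
      _ = (f ≫ ι₂ (𝟙_ C) A) ≫ (λ_ A).hom := by rw [Category.assoc]
      _ = ι₁ (𝟙_ C) A ≫ (λ_ A).hom := by rw [← h2]
  refine ⟨fun A => ⟨ι₁ (𝟙_ C) A ≫ (λ_ A).hom, trivial, fun y _ => uniq y⟩, ?_, ?_⟩
  · intro A B η
    have h := nat₁ (𝟙 A) η
    rw [hr, Category.id_comp] at h
    exact h.symm
  · intro A B η
    have h := nat₂ η (𝟙 B)
    rw [hl, Category.id_comp] at h
    exact h.symm
end
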